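/- arXiv:1701.01672 — 4 statements merged into one kernel-verified Lean document; each statement's English description precedes it below -/
import Mathlib

section
/- Let τ = (τ_1,…,τ_k) be a changepoint vector in T_s for some integer 1 ≤ s < n. If τ ∉ T*_s (i.e., there is no φ ∈ ℝ with f^s(φ) = f_τ^s(φ)), then for every integer t with s < t ≤ n the concatenated vector (τ, s) = (τ_1,…,τ_k, s) satisfies (τ, s) ∉ T*_t; that is, there is no φ ∈ ℝ with f^t(φ) = f_{(τ,s)}^t(φ). -/
open Finset

/-- Segment cost `C(s,t,φ,ψ)`: cost of fitting data `y_{s+1:t}` with a linear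
function taking value `φ` at time `s` and value `ψ` at time `t`. -/
noncomputable def segCost (y : ℕ → ℝ) (σ : ℝ) (s t : ℕ) (φ ψ : ℝ) : ℝ :=
  (1 / σ ^ 2) * ∑ j ∈ Finset.Icc (s + 1) t,
    (y j - φ - ((ψ - φ) / ((t : ℝ) - (s : ℝ))) * ((j : ℝ) - (s : ℝ))) ^ 2

/-- `ValidCP t τ` : `τ` is a (possibly empty) strictly increasing vector of
changepoints `0 < τ₁ < ⋯ < τ_k < t`, i.e. an element of `T_t`. -/
def ValidCP (t : ℕ) (τ : List ℕ) : Prop :=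
  τ.Chain' (· < ·) ∧ ∀ x ∈ τ, 0 < x ∧ x < t

/-- Penalised cost of segmenting `y_{1:t}` with changepoints `τ = (τ₁,…,τ_k)`,
fitted values `φs 0, …, φs k` at times `0, τ₁, …, τ_k`, and fitted value `φ` at time `t`. -/
noncomputable def segTotal (y : ℕ → ℝ) (σ β : ℝ) (h : ℕ → ℝ) (t : ℕ)
    (τ : List ℕ) (φs : ℕ → ℝ) (φ : ℝ) : ℝ :=
  let p : ℕ → ℕ := fun i => (0 :: τ).getD i 0
  (∑ i ∈ Finset.range τ.length,
      (segCost y σ (p i) (p (i + 1)) (φs i) (φs (i + 1)) + h (p (i + 1) - p i)))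
    + segCost y σ (p τ.length) t (φs τ.length) φ + h (t - p τ.length)
    + β * ((τ.length : ℝ) + 1)

/-- `f_τ^t(φ)` : minimum penalised cost of segmenting `y_{1:t}` with changepoints `τ`
and fitted value `φ` at time `t`, minimised over the fitted values at the changepoints. -/
noncomputable def fseg (y : ℕ → ℝ) (σ β : ℝ) (h : ℕ → ℝ) (t : ℕ)
    (τ : List ℕ) (φ : ℝ) : ℝ :=
  ⨅ φs : ℕ → ℝ, segTotal y σ β h t τ φs φ

/-- `f^t(φ)` : minimum penalised cost of segmenting `y_{1:t}` with fitted value `φ`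
at time `t`, minimised over all changepoint vectors in `T_t`; `f^0 ≡ 0`. -/
noncomputable def fDP (y : ℕ → ℝ) (σ β : ℝ) (h : ℕ → ℝ) (t : ℕ) (φ : ℝ) : ℝ :=
  if t = 0 then 0 else ⨅ τ : {τ : List ℕ // ValidCP t τ}, fseg y σ β h t τ.1 φ

/-! ### Basic lemmas -/

noncomputable def baseC (β : ℝ) (h : ℕ → ℝ) (t : ℕ) (τ : List ℕ) : ℝ :=
  let p : ℕ → ℕ := fun i => (0 :: τ).getD i 0
  (∑ i ∈ Finset.range τ.length, h (p (i + 1) - p i)) + h (t - p τ.length)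
    + β * ((τ.length : ℝ) + 1)

lemma segCost_nonneg (y : ℕ → ℝ) (σ : ℝ) (s t : ℕ) (φ ψ : ℝ) :
    0 ≤ segCost y σ s t φ ψ := by
  apply mul_nonneg
  · positivity
  · exact Finset.sum_nonneg fun j _ => sq_nonneg _

lemma baseC_le_segTotal (y : ℕ → ℝ) (σ β : ℝ) (h : ℕ → ℝ) (t : ℕ)
    (τ : List ℕ) (φs : ℕ → ℝ) (φ : ℝ) :
    baseC β h t τ ≤ segTotal y σ β h t τ φs φ := by
  unfold baseC segTotal
  simp only
  have h1 : (∑ i ∈ Finset.range τ.length, h ((0 :: τ).getD (i+1) 0 - (0 :: τ).getD i 0))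
      ≤ ∑ i ∈ Finset.range τ.length,
        (segCost y σ ((0 :: τ).getD i 0) ((0 :: τ).getD (i+1) 0) (φs i) (φs (i + 1))
          + h ((0 :: τ).getD (i+1) 0 - (0 :: τ).getD i 0)) := by
    apply Finset.sum_le_sum
    intro i _
    have := segCost_nonneg y σ ((0 :: τ).getD i 0) ((0 :: τ).getD (i+1) 0) (φs i) (φs (i + 1))
    linarith
  have h2 := segCost_nonneg y σ ((0 :: τ).getD τ.length 0) t (φs τ.length) φ
  linarith

lemma bddBelow_segTotal (y : ℕ → ℝ) (σ β : ℝ) (h : ℕ → ℝ) (t : ℕ)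
    (τ : List ℕ) (φ : ℝ) :
    BddBelow (Set.range fun φs => segTotal y σ β h t τ φs φ) := by
  refine ⟨baseC β h t τ, ?_⟩
  rintro x ⟨φs, rfl⟩
  exact baseC_le_segTotal y σ β h t τ φs φ

lemma fseg_le_segTotal (y : ℕ → ℝ) (σ β : ℝ) (h : ℕ → ℝ) (t : ℕ)
    (τ : List ℕ) (φs : ℕ → ℝ) (φ : ℝ) :
    fseg y σ β h t τ φ ≤ segTotal y σ β h t τ φs φ :=
  ciInf_le (bddBelow_segTotal y σ β h t τ φ) φs

lemma baseC_le_fseg (y : ℕ → ℝ) (σ β : ℝ) (h : ℕ → ℝ) (t : ℕ)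
    (τ : List ℕ) (φ : ℝ) :
    baseC β h t τ ≤ fseg y σ β h t τ φ :=
  le_ciInf fun φs => baseC_le_segTotal y σ β h t τ φs φ

/-! ### Finiteness of the set of valid changepoint vectors -/

lemma validCP_sorted {t : ℕ} {τ : List ℕ} (hτ : ValidCP t τ) : List.Pairwise (· < ·) τ :=
  List.isChain_iff_pairwise.1 hτ.1

instance validCP_finite (t : ℕ) : Finite {τ : List ℕ // ValidCP t τ} := by
  have : ∀ τ : {τ : List ℕ // ValidCP t τ}, τ.1.toFinset ∈ (Finset.range t).powerset := by
    intro ⟨τ, hτ⟩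
    simp only [Finset.mem_powerset]
    intro x hx
    rw [List.mem_toFinset] at hx
    exact Finset.mem_range.2 (hτ.2 x hx).2
  apply Finite.of_injective (fun τ => (⟨τ.1.toFinset, this τ⟩ : (Finset.range t).powerset))
  rintro ⟨τ1, h1⟩ ⟨τ2, h2⟩ he
  simp only [Subtype.mk.injEq] at he ⊢
  have s1 := validCP_sorted h1
  have s2 := validCP_sorted h2
  exact List.Perm.eq_of_pairwise (fun _ _ _ _ h1 h2 => absurd (h1.trans h2) (lt_irrefl _)) s1 s2
    (List.perm_of_nodup_nodup_toFinset_eq s1.nodup s2.nodup he)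

instance validCP_nonempty (t : ℕ) : Nonempty {τ : List ℕ // ValidCP t τ} :=
  ⟨⟨[], by constructor <;> simp [List.Chain']⟩⟩

set_option maxHeartbeats 1000000 in
lemma fDP_le_fseg (y : ℕ → ℝ) (σ β : ℝ) (h : ℕ → ℝ) {t : ℕ} (ht : t ≠ 0)
    {τ : List ℕ} (hτ : ValidCP t τ) (φ : ℝ) :
    fDP y σ β h t φ ≤ fseg y σ β h t τ φ := by
  rw [fDP, if_neg ht]
  have hb : BddBelow (Set.range fun τ' : {τ' : List ℕ // ValidCP t τ'} =>
      fseg y σ β h t τ'.1 φ) := (Set.finite_range _).bddBelow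
  exact ciInf_le hb ⟨τ, hτ⟩

lemma fDP_attained (y : ℕ → ℝ) (σ β : ℝ) (h : ℕ → ℝ) {t : ℕ} (ht : t ≠ 0) (φ : ℝ) :
    ∃ τ : List ℕ, ValidCP t τ ∧ fseg y σ β h t τ φ = fDP y σ β h t φ := by
  rw [fDP, if_neg ht]
  obtain ⟨⟨τ, hτ⟩, he⟩ :=
    exists_eq_ciInf_of_finite (f := fun τ : {τ : List ℕ // ValidCP t τ} => fseg y σ β h t τ.1 φ)
  exact ⟨τ, hτ, he⟩
/-! ### Splitting `segTotal` along an appended changepoint -/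

lemma getD_append_le (τ : List ℕ) (s : ℕ) {i : ℕ} (hi : i ≤ τ.length) :
    (0 :: (τ ++ [s])).getD i 0 = (0 :: τ).getD i 0 := by
  rw [show (0 :: (τ ++ [s])) = (0 :: τ) ++ [s] from rfl]
  exact List.getD_append _ _ _ _ (by simp; omega)

lemma getD_append_last (τ : List ℕ) (s : ℕ) :
    (0 :: (τ ++ [s])).getD (τ.length + 1) 0 = s := by
  rw [show (0 :: (τ ++ [s])) = (0 :: τ) ++ [s] from rfl]
  rw [List.getD_append_right _ _ _ _ (by simp)]
  simp

lemma segTotal_append (y : ℕ → ℝ) (σ β : ℝ) (h : ℕ → ℝ) (s t : ℕ)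
    (τ : List ℕ) (φs : ℕ → ℝ) (φ : ℝ) :
    segTotal y σ β h t (τ ++ [s]) φs φ
      = segTotal y σ β h s τ φs (φs (τ.length + 1))
        + segCost y σ s t (φs (τ.length + 1)) φ + (h (t - s) + β) := by
  unfold segTotal
  simp only [List.length_append, List.length_singleton]
  rw [Finset.sum_range_succ]
  have e1 : ∀ i ∈ Finset.range τ.length,
      segCost y σ ((0 :: (τ ++ [s])).getD i 0) ((0 :: (τ ++ [s])).getD (i+1) 0) (φs i) (φs (i+1))
        + h ((0 :: (τ ++ [s])).getD (i+1) 0 - (0 :: (τ ++ [s])).getD i 0)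
      = segCost y σ ((0 :: τ).getD i 0) ((0 :: τ).getD (i+1) 0) (φs i) (φs (i+1))
        + h ((0 :: τ).getD (i+1) 0 - (0 :: τ).getD i 0) := by
    intro i hi
    rw [Finset.mem_range] at hi
    rw [getD_append_le τ s (by omega), getD_append_le τ s (by omega)]
  rw [Finset.sum_congr rfl e1]
  rw [getD_append_last, getD_append_le τ s le_rfl]
  push_cast
  ring

/-- `segTotal` at time `s` with changepoints `τ` only depends on `φs i` for `i ≤ τ.length`. -/
lemma segTotal_update_high (y : ℕ → ℝ) (σ β : ℝ) (h : ℕ → ℝ) (s : ℕ)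
    (τ : List ℕ) (φs : ℕ → ℝ) (c x : ℝ) {m : ℕ} (hm : τ.length < m) :
    segTotal y σ β h s τ (Function.update φs m c) x = segTotal y σ β h s τ φs x := by
  unfold segTotal
  simp only
  have hu : ∀ i ≤ τ.length, Function.update φs m c i = φs i := by
    intro i hi
    exact Function.update_of_ne (by omega) _ _
  rw [hu τ.length le_rfl]
  congr 3
  apply Finset.sum_congr rfl
  intro i hi
  rw [Finset.mem_range] at hi
  rw [hu i (by omega), hu (i+1) (by omega)]

/-- Direction 1: extending any segmentation of `y_{1:s}` gives an upper bound at time `t`. -/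
lemma fseg_append_le (y : ℕ → ℝ) (σ β : ℝ) (h : ℕ → ℝ) (s t : ℕ)
    (τ : List ℕ) (φ' φ : ℝ) :
    fseg y σ β h t (τ ++ [s]) φ
      ≤ fseg y σ β h s τ φ' + segCost y σ s t φ' φ + (h (t - s) + β) := by
  have key : ∀ φs : ℕ → ℝ,
      fseg y σ β h t (τ ++ [s]) φ - (segCost y σ s t φ' φ + (h (t - s) + β))
        ≤ segTotal y σ β h s τ φs φ' := by
    intro φs
    have h1 := fseg_le_segTotal y σ β h t (τ ++ [s]) (Function.update φs (τ.length + 1) φ') φ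
    rw [segTotal_append] at h1
    rw [Function.update_self] at h1
    rw [segTotal_update_high y σ β h s τ φs φ' φ' (by omega)] at h1
    linarith
  have h2 := le_ciInf key
  rw [← fseg] at h2
  linarith

/-- Coercivity: the cost of a segmentation of `y_{1:s}` ending at value `φ` dominates
`(y s - φ)²/σ²`. -/
lemma coercive (y : ℕ → ℝ) (σ β : ℝ) (h : ℕ → ℝ) {s : ℕ} (hs : 1 ≤ s)
    {τ : List ℕ} (hτ : ValidCP s τ) (φs : ℕ → ℝ) (φ : ℝ) :
    (1 / σ ^ 2) * (y s - φ) ^ 2 + baseC β h s τ ≤ segTotal y σ β h s τ φs φ := by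
  have hp : (0 :: τ).getD τ.length 0 < s := by
    have : (0 :: τ).getD τ.length 0 ∈ (0 :: τ) ∨ (0 :: τ).getD τ.length 0 = 0 := by
      rcases lt_or_ge τ.length (0 :: τ).length with hl | hl
      · left; rw [List.getD_eq_getElem _ _ hl]; exact List.getElem_mem _
      · right; exact List.getD_eq_default _ _ hl
    rcases this with hmem | h0
    · rcases List.mem_cons.1 hmem with h0 | hmem
      · omega
      · exact (hτ.2 _ hmem).2
    · omega
  set q := (0 :: τ).getD τ.length 0 with hq
  have hkey : (1 / σ ^ 2) * (y s - φ) ^ 2 ≤ segCost y σ q s (φs τ.length) φ := by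
    unfold segCost
    apply mul_le_mul_of_nonneg_left _ (by positivity)
    have hmem : s ∈ Finset.Icc (q + 1) s := by
      rw [Finset.mem_Icc]; omega
    have : (y s - φ) ^ 2
        = (y s - φs τ.length - ((φ - φs τ.length) / ((s : ℝ) - (q : ℝ))) * ((s : ℝ) - (q : ℝ))) ^ 2 := by
      rw [div_mul_cancel₀]
      · ring_nf
      · have : (q : ℝ) < (s : ℝ) := by exact_mod_cast hp
        intro hc
        nlinarith
    rw [this]
    exact Finset.single_le_sum (f := fun j =>
      (y j - φs τ.length - ((φ - φs τ.length) / ((s : ℝ) - (q : ℝ))) * ((j : ℝ) - (q : ℝ))) ^ 2)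
      (fun j _ => sq_nonneg _) hmem
  unfold segTotal baseC
  simp only [← hq]
  have h1 : (∑ i ∈ Finset.range τ.length, h ((0 :: τ).getD (i+1) 0 - (0 :: τ).getD i 0))
      ≤ ∑ i ∈ Finset.range τ.length,
        (segCost y σ ((0 :: τ).getD i 0) ((0 :: τ).getD (i+1) 0) (φs i) (φs (i + 1))
          + h ((0 :: τ).getD (i+1) 0 - (0 :: τ).getD i 0)) := by
    apply Finset.sum_le_sum
    intro i _
    have := segCost_nonneg y σ ((0 :: τ).getD i 0) ((0 :: τ).getD (i+1) 0) (φs i) (φs (i + 1))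
    linarith
  linarith

lemma fseg_coercive (y : ℕ → ℝ) (σ β : ℝ) (h : ℕ → ℝ) {s : ℕ} (hs : 1 ≤ s)
    {τ : List ℕ} (hτ : ValidCP s τ) (φ : ℝ) :
    (1 / σ ^ 2) * (y s - φ) ^ 2 + baseC β h s τ ≤ fseg y σ β h s τ φ :=
  le_ciInf fun φs => coercive y σ β h hs hτ φs φ
/-! ### Convexity and continuity of `fseg` and `fDP` -/

lemma sq_comb {a b x u : ℝ} (ha : 0 ≤ a) (hb : 0 ≤ b) (hab : a + b = 1) :
    (a * x + b * u) ^ 2 ≤ a * x ^ 2 + b * u ^ 2 := by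
  nlinarith [mul_nonneg (mul_nonneg ha hb) (sq_nonneg (x - u))]

lemma segCost_comb (y : ℕ → ℝ) (σ : ℝ) (s t : ℕ) {a b : ℝ}
    (ha : 0 ≤ a) (hb : 0 ≤ b) (hab : a + b = 1) (φ1 ψ1 φ2 ψ2 : ℝ) :
    segCost y σ s t (a * φ1 + b * φ2) (a * ψ1 + b * ψ2)
      ≤ a * segCost y σ s t φ1 ψ1 + b * segCost y σ s t φ2 ψ2 := by
  unfold segCost
  have hterm : (∑ j ∈ Finset.Icc (s + 1) t,
        (y j - (a * φ1 + b * φ2)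
          - ((a * ψ1 + b * ψ2 - (a * φ1 + b * φ2)) / ((t : ℝ) - (s : ℝ))) * ((j : ℝ) - (s : ℝ))) ^ 2)
      ≤ a * ∑ j ∈ Finset.Icc (s + 1) t,
          (y j - φ1 - ((ψ1 - φ1) / ((t : ℝ) - (s : ℝ))) * ((j : ℝ) - (s : ℝ))) ^ 2
        + b * ∑ j ∈ Finset.Icc (s + 1) t,
          (y j - φ2 - ((ψ2 - φ2) / ((t : ℝ) - (s : ℝ))) * ((j : ℝ) - (s : ℝ))) ^ 2 := by
    rw [Finset.mul_sum, Finset.mul_sum, ← Finset.sum_add_distrib]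
    apply Finset.sum_le_sum
    intro j _
    have key : (y j - (a * φ1 + b * φ2)
          - ((a * ψ1 + b * ψ2 - (a * φ1 + b * φ2)) / ((t : ℝ) - (s : ℝ))) * ((j : ℝ) - (s : ℝ)))
        = a * (y j - φ1 - ((ψ1 - φ1) / ((t : ℝ) - (s : ℝ))) * ((j : ℝ) - (s : ℝ)))
          + b * (y j - φ2 - ((ψ2 - φ2) / ((t : ℝ) - (s : ℝ))) * ((j : ℝ) - (s : ℝ))) := by
      have hy : y j = (a + b) * y j := by rw [hab]; ring
      linear_combination (-(y j)) * hab
    rw [key]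
    exact sq_comb ha hb hab
  calc (1 / σ ^ 2) * _ ≤ (1 / σ ^ 2) * _ := mul_le_mul_of_nonneg_left hterm (by positivity)
    _ = a * ((1 / σ ^ 2) * ∑ j ∈ Finset.Icc (s + 1) t,
          (y j - φ1 - ((ψ1 - φ1) / ((t : ℝ) - (s : ℝ))) * ((j : ℝ) - (s : ℝ))) ^ 2)
        + b * ((1 / σ ^ 2) * ∑ j ∈ Finset.Icc (s + 1) t,
          (y j - φ2 - ((ψ2 - φ2) / ((t : ℝ) - (s : ℝ))) * ((j : ℝ) - (s : ℝ))) ^ 2) := by ring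

lemma segTotal_comb (y : ℕ → ℝ) (σ β : ℝ) (h : ℕ → ℝ) (t : ℕ) (τ : List ℕ)
    {a b : ℝ} (ha : 0 ≤ a) (hb : 0 ≤ b) (hab : a + b = 1)
    (φs1 φs2 : ℕ → ℝ) (φ1 φ2 : ℝ) :
    segTotal y σ β h t τ (fun i => a * φs1 i + b * φs2 i) (a * φ1 + b * φ2)
      ≤ a * segTotal y σ β h t τ φs1 φ1 + b * segTotal y σ β h t τ φs2 φ2 := by
  unfold segTotal
  simp only
  have hsum : (∑ i ∈ Finset.range τ.length,
        (segCost y σ ((0 :: τ).getD i 0) ((0 :: τ).getD (i+1) 0)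
            (a * φs1 i + b * φs2 i) (a * φs1 (i+1) + b * φs2 (i+1))
          + h ((0 :: τ).getD (i+1) 0 - (0 :: τ).getD i 0)))
      ≤ a * ∑ i ∈ Finset.range τ.length,
          (segCost y σ ((0 :: τ).getD i 0) ((0 :: τ).getD (i+1) 0) (φs1 i) (φs1 (i+1))
            + h ((0 :: τ).getD (i+1) 0 - (0 :: τ).getD i 0))
        + b * ∑ i ∈ Finset.range τ.length,
          (segCost y σ ((0 :: τ).getD i 0) ((0 :: τ).getD (i+1) 0) (φs2 i) (φs2 (i+1))
            + h ((0 :: τ).getD (i+1) 0 - (0 :: τ).getD i 0)) := by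
    rw [Finset.mul_sum, Finset.mul_sum, ← Finset.sum_add_distrib]
    apply Finset.sum_le_sum
    intro i _
    have h1 := segCost_comb y σ ((0 :: τ).getD i 0) ((0 :: τ).getD (i+1) 0) ha hb hab
      (φs1 i) (φs1 (i+1)) (φs2 i) (φs2 (i+1))
    have h2 : a * (segCost y σ ((0 :: τ).getD i 0) ((0 :: τ).getD (i+1) 0) (φs1 i) (φs1 (i+1))
          + h ((0 :: τ).getD (i+1) 0 - (0 :: τ).getD i 0))
        + b * (segCost y σ ((0 :: τ).getD i 0) ((0 :: τ).getD (i+1) 0) (φs2 i) (φs2 (i+1))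
          + h ((0 :: τ).getD (i+1) 0 - (0 :: τ).getD i 0))
        = a * segCost y σ ((0 :: τ).getD i 0) ((0 :: τ).getD (i+1) 0) (φs1 i) (φs1 (i+1))
          + b * segCost y σ ((0 :: τ).getD i 0) ((0 :: τ).getD (i+1) 0) (φs2 i) (φs2 (i+1))
          + h ((0 :: τ).getD (i+1) 0 - (0 :: τ).getD i 0) := by
      linear_combination (h ((0 :: τ).getD (i+1) 0 - (0 :: τ).getD i 0)) * hab
    linarith
  have hlast := segCost_comb y σ ((0 :: τ).getD τ.length 0) t ha hb hab
    (φs1 τ.length) φ1 (φs2 τ.length) φ2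
  have hconst : a * (h (t - (0 :: τ).getD τ.length 0) + β * ((τ.length : ℝ) + 1))
      + b * (h (t - (0 :: τ).getD τ.length 0) + β * ((τ.length : ℝ) + 1))
      = h (t - (0 :: τ).getD τ.length 0) + β * ((τ.length : ℝ) + 1) := by
    linear_combination (h (t - (0 :: τ).getD τ.length 0) + β * ((τ.length : ℝ) + 1)) * hab
  nlinarith [hsum, hlast, hconst]

lemma fseg_convexOn (y : ℕ → ℝ) (σ β : ℝ) (h : ℕ → ℝ) (t : ℕ) (τ : List ℕ) :
    ConvexOn ℝ Set.univ (fseg y σ β h t τ) := by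
  refine ⟨convex_univ, ?_⟩
  intro x _ z _ a b ha hb hab
  simp only [smul_eq_mul]
  rcases eq_or_lt_of_le ha with rfl | hapos
  · have hb1 : b = 1 := by linarith
    simp [hb1]
  rcases eq_or_lt_of_le hb with rfl | hbpos
  · have ha1 : a = 1 := by linarith
    simp [ha1]
  -- both positive
  have step1 : ∀ u v : ℕ → ℝ, fseg y σ β h t τ (a * x + b * z)
      ≤ a * segTotal y σ β h t τ u x + b * segTotal y σ β h t τ v z := by
    intro u v
    calc fseg y σ β h t τ (a * x + b * z)
        ≤ segTotal y σ β h t τ (fun i => a * u i + b * v i) (a * x + b * z) :=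
          fseg_le_segTotal _ _ _ _ _ _ _ _
      _ ≤ a * segTotal y σ β h t τ u x + b * segTotal y σ β h t τ v z :=
          segTotal_comb y σ β h t τ ha hb hab u v x z
  have step2 : ∀ u : ℕ → ℝ, fseg y σ β h t τ (a * x + b * z)
      ≤ a * segTotal y σ β h t τ u x + b * fseg y σ β h t τ z := by
    intro u
    have : ∀ v : ℕ → ℝ, (fseg y σ β h t τ (a * x + b * z) - a * segTotal y σ β h t τ u x) / b
        ≤ segTotal y σ β h t τ v z := by
      intro v
      rw [div_le_iff₀ hbpos]
      have := step1 u v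
      linarith
    have h2 := le_ciInf this
    rw [← fseg, div_le_iff₀ hbpos] at h2
    linarith
  have step3 : ∀ u : ℕ → ℝ, (fseg y σ β h t τ (a * x + b * z) - b * fseg y σ β h t τ z) / a
      ≤ segTotal y σ β h t τ u x := by
    intro u
    rw [div_le_iff₀ hapos]
    have := step2 u
    linarith
  have h3 := le_ciInf step3
  rw [← fseg, div_le_iff₀ hapos] at h3
  linarith

lemma fseg_continuous (y : ℕ → ℝ) (σ β : ℝ) (h : ℕ → ℝ) (t : ℕ) (τ : List ℕ) :
    Continuous (fseg y σ β h t τ) := by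
  have := (fseg_convexOn y σ β h t τ).continuousOn isOpen_univ
  rw [← continuousOn_univ]
  exact this

lemma continuous_finset_inf' {ι : Type*} {f : ι → ℝ → ℝ} (hf : ∀ i, Continuous (f i))
    (s : Finset ι) (hs : s.Nonempty) :
    Continuous (fun x => s.inf' hs (fun i => f i x)) := by
  induction hs using Finset.Nonempty.cons_induction with
  | singleton a => simpa using hf a
  | cons a s ha hs ih =>
      have he : (fun x => (Finset.cons a s ha).inf' (Finset.cons_nonempty ha) (fun i => f i x))
          = fun x => min (f a x) (s.inf' hs (fun i => f i x)) := by
        funext x; rw [Finset.inf'_cons]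
      rw [he]
      exact (hf a).min ih

set_option maxHeartbeats 2000000 in
lemma fDP_continuous (y : ℕ → ℝ) (σ β : ℝ) (h : ℕ → ℝ) {t : ℕ} (ht : t ≠ 0) :
    Continuous (fDP y σ β h t) := by
  have : Fintype {τ : List ℕ // ValidCP t τ} := Fintype.ofFinite _
  have hne : (Finset.univ : Finset {τ : List ℕ // ValidCP t τ}).Nonempty :=
    Finset.univ_nonempty
  have key : fDP y σ β h t = fun φ =>
      Finset.univ.inf' hne (fun τ' : {τ : List ℕ // ValidCP t τ} => fseg y σ β h t τ'.1 φ) := by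
    funext φ
    rw [fDP, if_neg ht, Finset.inf'_eq_csInf_image, Finset.coe_univ, Set.image_univ, iInf]
  rw [key]
  exact continuous_finset_inf'
    (f := fun (τ' : {τ : List ℕ // ValidCP t τ}) (φ : ℝ) => fseg y σ β h t τ'.1 φ)
    (fun τ' => fseg_continuous y σ β h t τ'.1) Finset.univ hne
/-! ### Validity of the appended vector and the main theorem -/

lemma validCP_append {s t : ℕ} (hs1 : 1 ≤ s) (hst : s < t) {τ : List ℕ}
    (hτ : ValidCP s τ) : ValidCP t (τ ++ [s]) := by
  constructor
  · unfold List.Chain'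
    rw [List.isChain_append]
    refine ⟨hτ.1, List.isChain_singleton s, ?_⟩
    intro x hx y' hy'
    simp only [List.head?_cons, Option.mem_def, Option.some.injEq] at hy'
    subst hy'
    obtain ⟨hne, hxl⟩ := List.mem_getLast?_eq_getLast hx
    subst hxl
    exact (hτ.2 _ (List.getLast_mem hne)).2
  · intro x hx
    rcases List.mem_append.1 hx with hx | hx
    · exact ⟨(hτ.2 x hx).1, lt_trans (hτ.2 x hx).2 hst⟩
    · rw [List.mem_singleton] at hx
      subst hx
      exact ⟨hs1, hst⟩

/-- Theorem 1 of the paper, functional pruning: if `τ ∈ T_s` is not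
functionally optimal at time `s` (no `φ` with `f^s(φ) = f_τ^s(φ)`), then for every
`t` with `s < t ≤ n` the concatenation `(τ, s)` is not functionally optimal at time `t`. -/
theorem statement0 (n : ℕ) (hn : 1 ≤ n) (y : ℕ → ℝ) (σ : ℝ) (hσ : 0 < σ)
    (β : ℝ) (hβ : 0 < β) (h : ℕ → ℝ)
    (s : ℕ) (hs1 : 1 ≤ s) (hsn : s < n)
    (τ : List ℕ) (hτ : ValidCP s τ)
    (hnotopt : ¬ ∃ φ : ℝ, fDP y σ β h s φ = fseg y σ β h s τ φ) :
    ∀ t : ℕ, s < t → t ≤ n →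
      ¬ ∃ φ : ℝ, fDP y σ β h t φ = fseg y σ β h t (τ ++ [s]) φ := by
  
  intro t hst htn
  rintro ⟨φ, hopt⟩
  have hne_t : t ≠ 0 := by omega
  have hne_s : s ≠ 0 := by omega
  -- pointwise strict inequality at time `s`
  have hDpos : ∀ φ', fDP y σ β h s φ' < fseg y σ β h s τ φ' := by
    intro φ'
    rcases lt_or_eq_of_le (fDP_le_fseg y σ β h hne_s hτ φ') with hlt | heq
    · exact hlt
    · exact absurd ⟨φ', heq⟩ hnotopt
  set L := fseg y σ β h t (τ ++ [s]) φ with hL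
  set cst := baseC β h s τ + (h (t - s) + β) with hcst
  set R := Real.sqrt (max (σ ^ 2 * (L + 1 - cst)) 0) with hR
  have hR0 : 0 ≤ R := Real.sqrt_nonneg _
  -- uniform gap δ on the compact interval
  have hK : IsCompact (Set.Icc (y s - R) (y s + R)) := isCompact_Icc
  have hKne : (Set.Icc (y s - R) (y s + R)).Nonempty :=
    ⟨y s, Set.mem_Icc.2 ⟨by linarith, by linarith⟩⟩
  have hcont : ContinuousOn (fun x => fseg y σ β h s τ x - fDP y σ β h s x)
      (Set.Icc (y s - R) (y s + R)) :=
    ((fseg_continuous y σ β h s τ).sub (fDP_continuous y σ β h hne_s)).continuousOn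
  obtain ⟨x0, hx0K, hx0min⟩ := hK.exists_isMinOn hKne hcont
  set δ := fseg y σ β h s τ x0 - fDP y σ β h s x0 with hδ
  have hδpos : 0 < δ := by
    have := hDpos x0
    rw [hδ]; linarith
  set ε := min δ 1 with hε
  have hεpos : 0 < ε := lt_min hδpos one_pos
  have hεδ : ε ≤ δ := min_le_left _ _
  have hε1 : ε ≤ 1 := min_le_right _ _
  -- near-minimiser of the extended cost
  have hlt : fseg y σ β h t (τ ++ [s]) φ < L + ε := by rw [← hL]; linarith
  rw [fseg] at hlt
  obtain ⟨φs, hφs⟩ := exists_lt_of_ciInf_lt hlt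
  rw [segTotal_append] at hφs
  set φ' := φs (τ.length + 1) with hφ'
  -- hφs : segTotal s τ φs φ' + segCost s t φ' φ + (h (t-s) + β) < L + ε
  have hC0 := segCost_nonneg y σ s t φ' φ
  have hcoer := coercive y σ β h hs1 hτ φs φ'
  have hσ2 : (0:ℝ) < σ ^ 2 := by positivity
  -- the near-minimiser lies in the compact interval
  have hsq : (y s - φ') ^ 2 ≤ max (σ ^ 2 * (L + 1 - cst)) 0 := by
    have h1 : (1 / σ ^ 2) * (y s - φ') ^ 2 ≤ L + 1 - cst := by
      rw [hcst]; linarith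
    have h2 : (y s - φ') ^ 2 ≤ σ ^ 2 * (L + 1 - cst) := by
      calc (y s - φ') ^ 2 = σ ^ 2 * ((1 / σ ^ 2) * (y s - φ') ^ 2) := by field_simp
        _ ≤ σ ^ 2 * (L + 1 - cst) := mul_le_mul_of_nonneg_left h1 (le_of_lt hσ2)
    exact le_trans h2 (le_max_left _ _)
  have hmem : φ' ∈ Set.Icc (y s - R) (y s + R) := by
    have habs : |y s - φ'| ≤ R := by
      rw [hR, ← Real.sqrt_sq_eq_abs]
      exact Real.sqrt_le_sqrt hsq
    rw [abs_le] at habs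
    exact Set.mem_Icc.2 ⟨by linarith [habs.1, habs.2], by linarith [habs.1, habs.2]⟩
  have hgap : δ ≤ fseg y σ β h s τ φ' - fDP y σ β h s φ' := isMinOn_iff.1 hx0min φ' hmem
  -- an optimal segmentation at time `s`, extended to time `t`
  obtain ⟨τ'', hτ'', hatt⟩ := fDP_attained y σ β h hne_s φ'
  have hdir1 := fseg_append_le y σ β h s t τ'' φ' φ
  have hfDPle : fDP y σ β h t φ ≤ fseg y σ β h t (τ'' ++ [s]) φ :=
    fDP_le_fseg y σ β h hne_t (validCP_append hs1 hst hτ'') φ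
  have hfs : fseg y σ β h s τ φ' ≤ segTotal y σ β h s τ φs φ' :=
    fseg_le_segTotal y σ β h s τ φs φ'
  have hfinal : fDP y σ β h t φ < L := by linarith
  rw [hopt] at hfinal
  exact lt_irrefl _ hfinal
end

section
/- Correctness of the dynamic programming value: the infimum over φ ∈ ℝ of f^n(φ) equals the infimum of the penalised cost over all segmentations, i.e. it equals the infimum, over all integers m ≥ 0, all strictly increasing integer changepoint vectors 0 = τ_0 < τ_1 < ⋯ < τ_m < τ_{m+1} = n, and all (φ_0,…,φ_{m+1}) ∈ ℝ^{m+2}, of ∑_{i=0}^{m}[ C(τ_i, τ_{i+1}, φ_i, φ_{i+1}) + h(τ_{i+1}−τ_i) ] + β·(m+1). -/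
open Finset

/-- the extended changepoint sequence `0, τ₁, …, τ_k`. -/
def pf (τ : List ℕ) (i : ℕ) : ℕ := (0 :: τ).getD i 0

lemma pf_pairwise {n : ℕ} {τ : List ℕ} (hτ : ValidCP n τ) :
    (0 :: τ).Pairwise (· < ·) := by
  rw [← List.isChain_iff_pairwise]
  cases τ with
  | nil => simp
  | cons a l =>
    rw [List.isChain_cons_cons]
    exact ⟨(hτ.2 a (by simp)).1, hτ.1⟩

lemma pf_mono {n : ℕ} {τ : List ℕ} (hτ : ValidCP n τ) {i j : ℕ}
    (hij : i < j) (hj : j ≤ τ.length) : pf τ i < pf τ j := by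
  have hj' : j < (0 :: τ).length := by simp; omega
  unfold pf
  rw [List.getD_eq_getElem _ 0 (by omega), List.getD_eq_getElem _ 0 hj']
  exact List.pairwise_iff_get.mp (pf_pairwise hτ) ⟨i, by omega⟩ ⟨j, hj'⟩ hij

lemma pf_lt_n {n : ℕ} (hn : 1 ≤ n) {τ : List ℕ} (hτ : ValidCP n τ) {i : ℕ}
    (hi : i ≤ τ.length) : pf τ i < n := by
  have hi' : i < (0 :: τ).length := by simp; omega
  have hmem : pf τ i ∈ (0 :: τ) := by
    unfold pf; rw [List.getD_eq_getElem _ 0 hi']; exact List.getElem_mem _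
  rcases List.mem_cons.mp hmem with h0 | hmem
  · omega
  · exact (hτ.2 _ hmem).2

lemma pf_ge {n : ℕ} {τ : List ℕ} (hτ : ValidCP n τ) :
    ∀ i, i ≤ τ.length → i ≤ pf τ i := by
  intro i
  induction i with
  | zero => omega
  | succ i ih =>
    intro hi
    have h1 := ih (by omega)
    have h2 : pf τ i < pf τ (i+1) := pf_mono hτ (Nat.lt_succ_self i) hi
    show i + 1 ≤ pf τ (i+1)
    omega

lemma pf_zero (τ : List ℕ) : pf τ 0 = 0 := rfl

/-- strict monotonicity from successive steps -/
lemma stepMono {τ : ℕ → ℕ} {m : ℕ} (hstep : ∀ i ≤ m, τ i < τ (i + 1)) :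
    ∀ j, j ≤ m + 1 → ∀ i, i < j → τ i < τ j := by
  intro j
  induction j with
  | zero => omega
  | succ j ih =>
    intro hj i hi
    have hs : τ j < τ (j + 1) := hstep j (by omega)
    rcases Nat.lt_succ_iff_lt_or_eq.mp hi with hij | rfl
    · exact lt_trans (ih (by omega) i hij) hs
    · exact hs

lemma stepGe {τ : ℕ → ℕ} {m : ℕ} (hstep : ∀ i ≤ m, τ i < τ (i + 1)) (h0 : τ 0 = 0) :
    ∀ j, j ≤ m + 1 → j ≤ τ j := by
  intro j
  induction j with
  | zero => omega
  | succ j ih =>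
    intro hj
    have := hstep j (by omega)
    have := ih (by omega)
    omega

lemma segTotal_eq (y : ℕ → ℝ) (σ β : ℝ) (h : ℕ → ℝ) (t : ℕ)
    (τ : List ℕ) (φs : ℕ → ℝ) (φ : ℝ) :
    segTotal y σ β h t τ φs φ =
      (∑ i ∈ Finset.range τ.length,
        (segCost y σ (pf τ i) (pf τ (i + 1)) (φs i) (φs (i + 1)) + h (pf τ (i + 1) - pf τ i)))
      + segCost y σ (pf τ τ.length) t (φs τ.length) φ + h (t - pf τ τ.length)
      + β * ((τ.length : ℝ) + 1) := rfl

lemma segTotal_ge (y : ℕ → ℝ) {σ β : ℝ} (hβ : 0 < β) (h : ℕ → ℝ) {n : ℕ} (hn : 1 ≤ n)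
    {M : ℝ} (hM0 : M ≤ 0) (hMh : ∀ d, 1 ≤ d → d ≤ n → M ≤ h d)
    {τ : List ℕ} (hτ : ValidCP n τ) (φs : ℕ → ℝ) (φ : ℝ) :
    (n : ℝ) * M + β ≤ segTotal y σ β h n τ φs φ := by
  rw [segTotal_eq]
  set k := τ.length with hk
  have hkn : k + 1 ≤ n := by
    have h1 := pf_ge hτ k le_rfl
    have h2 := pf_lt_n hn hτ (le_refl k)
    omega
  have hsum : (k : ℝ) * M ≤ ∑ i ∈ Finset.range k,
      (segCost y σ (pf τ i) (pf τ (i + 1)) (φs i) (φs (i + 1)) + h (pf τ (i + 1) - pf τ i)) := by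
    calc (k : ℝ) * M = ∑ _i ∈ Finset.range k, M := by
          rw [Finset.sum_const, Finset.card_range, nsmul_eq_mul]
      _ ≤ _ := by
          apply Finset.sum_le_sum
          intro i hi
          rw [Finset.mem_range] at hi
          have hlt : pf τ i < pf τ (i + 1) := pf_mono hτ (Nat.lt_succ_self i) (by omega)
          have hub : pf τ (i + 1) < n := pf_lt_n hn hτ (by omega)
          have := segCost_nonneg y σ (pf τ i) (pf τ (i + 1)) (φs i) (φs (i + 1))
          have := hMh (pf τ (i + 1) - pf τ i) (by omega) (by omega)
          linarith
  have hc := segCost_nonneg y σ (pf τ k) n (φs k) φ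
  have hlast : M ≤ h (n - pf τ k) := by
    have h2 := pf_lt_n hn hτ (le_refl k)
    exact hMh _ (by omega) (by omega)
  have hM' : (n : ℝ) * M ≤ ((k : ℝ) + 1) * M := by
    apply mul_le_mul_of_nonpos_right _ hM0
    exact_mod_cast hkn
  have hβ' : β * 1 ≤ β * ((k : ℝ) + 1) := by
    apply mul_le_mul_of_nonneg_left _ (le_of_lt hβ)
    have : (0 : ℝ) ≤ (k : ℝ) := Nat.cast_nonneg k
    linarith
  nlinarith [hsum, hc, hlast, hM', hβ']

lemma rform_ge (y : ℕ → ℝ) {σ β : ℝ} (hβ : 0 < β) (h : ℕ → ℝ) {n : ℕ} (hn : 1 ≤ n)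
    {M : ℝ} (hM0 : M ≤ 0) (hMh : ∀ d, 1 ≤ d → d ≤ n → M ≤ h d)
    {m : ℕ} {τf : ℕ → ℕ} (φv : ℕ → ℝ) (h0 : τf 0 = 0) (h1 : τf (m + 1) = n)
    (hstep : ∀ i ≤ m, τf i < τf (i + 1)) :
    (n : ℝ) * M + β ≤
      (∑ i ∈ Finset.range (m + 1),
        (segCost y σ (τf i) (τf (i + 1)) (φv i) (φv (i + 1)) + h (τf (i + 1) - τf i)))
      + β * ((m : ℝ) + 1) := by
  have hmn : m + 1 ≤ n := by
    have := stepGe hstep h0 (m + 1) le_rfl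
    omega
  have hsum : ((m : ℝ) + 1) * M ≤ ∑ i ∈ Finset.range (m + 1),
      (segCost y σ (τf i) (τf (i + 1)) (φv i) (φv (i + 1)) + h (τf (i + 1) - τf i)) := by
    calc ((m : ℝ) + 1) * M = ∑ _i ∈ Finset.range (m + 1), M := by
          rw [Finset.sum_const, Finset.card_range, nsmul_eq_mul]; push_cast; ring
      _ ≤ _ := by
          apply Finset.sum_le_sum
          intro i hi
          rw [Finset.mem_range] at hi
          have hlt : τf i < τf (i + 1) := hstep i (by omega)
          have hub : τf (i + 1) ≤ n := by
            rcases Nat.lt_or_ge (i + 1) (m + 1) with hlt' | hge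
            · have := stepMono hstep (m + 1) le_rfl (i + 1) hlt'
              omega
            · have he : i + 1 = m + 1 := by omega
              rw [he]; omega
          have := segCost_nonneg y σ (τf i) (τf (i + 1)) (φv i) (φv (i + 1))
          have := hMh (τf (i + 1) - τf i) (by omega) (by omega)
          linarith
  have hM' : (n : ℝ) * M ≤ ((m : ℝ) + 1) * M := by
    apply mul_le_mul_of_nonpos_right _ hM0
    exact_mod_cast hmn
  have hβ' : β * 1 ≤ β * ((m : ℝ) + 1) := by
    apply mul_le_mul_of_nonneg_left _ (le_of_lt hβ)
    have : (0 : ℝ) ≤ (m : ℝ) := Nat.cast_nonneg m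
    linarith
  nlinarith [hsum, hM', hβ']

lemma pf_ofFun {τf : ℕ → ℕ} (h0 : τf 0 = 0) (m : ℕ) {i : ℕ} (hi : i ≤ m) :
    pf ((List.range m).map (fun j => τf (j + 1))) i = τf i := by
  cases i with
  | zero => simpa [pf] using h0.symm
  | succ i =>
    show ((List.range m).map (fun j => τf (j + 1))).getD i 0 = τf (i + 1)
    rw [List.getD_eq_getElem _ 0 (by simpa using hi)]
    simp

lemma valid_ofFun {n m : ℕ} {τf : ℕ → ℕ} (h0 : τf 0 = 0) (h1 : τf (m + 1) = n)
    (hstep : ∀ i ≤ m, τf i < τf (i + 1)) :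
    ValidCP n ((List.range m).map (fun j => τf (j + 1))) := by
  constructor
  · show List.IsChain _ _
    rw [List.isChain_map]
    rcases m with _ | m'
    · simp
    · rw [List.isChain_range_succ]
      intro j hj
      exact hstep (j + 1) (by omega)
  · intro x hx
    rw [List.mem_map] at hx
    obtain ⟨j, hj, rfl⟩ := hx
    rw [List.mem_range] at hj
    constructor
    · have := stepMono hstep (j + 1) (by omega) 0 (by omega)
      omega
    · have := stepMono hstep (m + 1) le_rfl (j + 1) (by omega)
      omega

set_option maxHeartbeats 1000000 in
/-- correctness of the DP value: `inf_φ f^n(φ)` equals the infimum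
of the penalised cost over all segmentations `0 = τ₀ < τ₁ < ⋯ < τ_m < τ_{m+1} = n`
and all fitted values `φ₀,…,φ_{m+1}`. -/
theorem statement4 (n : ℕ) (hn : 1 ≤ n) (y : ℕ → ℝ) (σ : ℝ) (hσ : 0 < σ)
    (β : ℝ) (hβ : 0 < β) (h : ℕ → ℝ) :
    (⨅ φ : ℝ, fDP y σ β h n φ) =
      sInf {r : ℝ | ∃ (m : ℕ) (τ : ℕ → ℕ) (φv : ℕ → ℝ),
        τ 0 = 0 ∧ τ (m + 1) = n ∧ (∀ i ≤ m, τ i < τ (i + 1)) ∧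
        r = (∑ i ∈ Finset.range (m + 1),
              (segCost y σ (τ i) (τ (i + 1)) (φv i) (φv (i + 1)) + h (τ (i + 1) - τ i)))
            + β * ((m : ℝ) + 1)} := by
  -- notation
  set S := {r : ℝ | ∃ (m : ℕ) (τ : ℕ → ℕ) (φv : ℕ → ℝ),
        τ 0 = 0 ∧ τ (m + 1) = n ∧ (∀ i ≤ m, τ i < τ (i + 1)) ∧
        r = (∑ i ∈ Finset.range (m + 1),
              (segCost y σ (τ i) (τ (i + 1)) (φv i) (φv (i + 1)) + h (τ (i + 1) - τ i)))
            + β * ((m : ℝ) + 1)} with hS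
  have hnz : n ≠ 0 := by omega
  -- lower bound M on h over [1, n] and 0
  obtain ⟨M, hM0, hMh⟩ : ∃ M : ℝ, M ≤ 0 ∧ ∀ d, 1 ≤ d → d ≤ n → M ≤ h d := by
    have hne : ((Finset.Icc 1 n).image h).Nonempty := by
      apply Finset.Nonempty.image
      exact ⟨1, Finset.mem_Icc.mpr ⟨le_rfl, hn⟩⟩
    refine ⟨min (((Finset.Icc 1 n).image h).min' hne) 0, min_le_right _ _, ?_⟩
    intro d h1 h2
    exact le_trans (min_le_left _ _)
      (Finset.min'_le _ _ (Finset.mem_image_of_mem h (Finset.mem_Icc.mpr ⟨h1, h2⟩)))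
  set B : ℝ := (n : ℝ) * M + β with hB
  haveI : Nonempty {τ : List ℕ // ValidCP n τ} :=
    ⟨⟨[], List.isChain_nil, by simp⟩⟩
  -- B is a lower bound for everything
  have hfsegB : ∀ (τ : {τ : List ℕ // ValidCP n τ}) (φ : ℝ), B ≤ fseg y σ β h n τ.1 φ :=
    fun τ φ => le_ciInf fun φs => segTotal_ge y hβ h hn hM0 hMh τ.2 φs φ
  have hfDPB : ∀ φ : ℝ, B ≤ fDP y σ β h n φ := by
    intro φ
    rw [fDP, if_neg hnz]
    exact le_ciInf fun τ => hfsegB τ φ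
  have hSB : B ∈ lowerBounds S := by
    rintro r ⟨m, τf, φv, h0, h1, hstep, rfl⟩
    exact rform_ge y hβ h hn hM0 hMh φv h0 h1 hstep
  have hSne : S.Nonempty := by
    refine ⟨segCost y σ 0 n (0 : ℝ) (0 : ℝ) + h n + β, 0,
      (fun i => if i = 0 then 0 else n), (fun _ => 0), rfl, rfl, ?_, ?_⟩
    · intro i hi
      interval_cases i
      simp [hn]; omega
    · simp
  apply le_antisymm
  · -- ⨅ φ, fDP ≤ sInf S
    apply le_csInf hSne
    rintro r ⟨m, τf, φv, h0, h1, hstep, rfl⟩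
    set τl : List ℕ := (List.range m).map (fun j => τf (j + 1)) with hτl
    have hvalid : ValidCP n τl := valid_ofFun h0 h1 hstep
    have hlen : τl.length = m := by simp [hτl]
    have hpf : ∀ i ≤ m, pf τl i = τf i := fun i hi => pf_ofFun h0 m hi
    have heq : segTotal y σ β h n τl φv (φv (m + 1)) =
        (∑ i ∈ Finset.range (m + 1),
          (segCost y σ (τf i) (τf (i + 1)) (φv i) (φv (i + 1)) + h (τf (i + 1) - τf i)))
        + β * ((m : ℝ) + 1) := by
      rw [segTotal_eq, hlen, Finset.sum_range_succ]
      have hs : ∀ i ∈ Finset.range m,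
          segCost y σ (pf τl i) (pf τl (i + 1)) (φv i) (φv (i + 1))
            + h (pf τl (i + 1) - pf τl i)
          = segCost y σ (τf i) (τf (i + 1)) (φv i) (φv (i + 1)) + h (τf (i + 1) - τf i) := by
        intro i hi
        rw [Finset.mem_range] at hi
        rw [hpf i (by omega), hpf (i + 1) (by omega)]
      rw [Finset.sum_congr rfl hs, hpf m le_rfl, h1]
      ring
    have s1 : (⨅ φ : ℝ, fDP y σ β h n φ) ≤ fDP y σ β h n (φv (m + 1)) :=
      ciInf_le (f := fun φ : ℝ => fDP y σ β h n φ)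
        ⟨B, by rintro x ⟨φ, rfl⟩; exact hfDPB φ⟩ (φv (m + 1))
    have s2 : fDP y σ β h n (φv (m + 1)) ≤ fseg y σ β h n τl (φv (m + 1)) := by
      rw [fDP, if_neg hnz]
      exact ciInf_le (f := fun τ : {τ : List ℕ // ValidCP n τ} => fseg y σ β h n τ.1 (φv (m + 1)))
        ⟨B, by rintro x ⟨τ, rfl⟩; exact hfsegB τ _⟩ ⟨τl, hvalid⟩
    have s3 : fseg y σ β h n τl (φv (m + 1)) ≤ segTotal y σ β h n τl φv (φv (m + 1)) :=
      ciInf_le (f := fun φs : ℕ → ℝ => segTotal y σ β h n τl φs (φv (m + 1)))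
        ⟨B, by rintro x ⟨φs, rfl⟩; exact segTotal_ge y hβ h hn hM0 hMh hvalid φs _⟩ φv
    rw [← heq]
    exact le_trans s1 (le_trans s2 s3)
  · -- sInf S ≤ ⨅ φ, fDP
    refine le_ciInf fun φ => ?_
    rw [fDP, if_neg hnz]
    refine le_ciInf fun τ => ?_
    refine le_ciInf fun φs => ?_
    apply csInf_le ⟨B, hSB⟩
    -- membership
    set m := τ.1.length with hm
    refine ⟨m, (fun i => if i ≤ m then pf τ.1 i else n), (fun i => if i ≤ m then φs i else φ),
      ?_, ?_, ?_, ?_⟩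
    · simp [pf]
    · simp
    · intro i hi
      beta_reduce
      rcases Nat.lt_or_ge i m with hlt | hge
      · rw [if_pos (by omega), if_pos (by omega)]
        exact pf_mono τ.2 (Nat.lt_succ_self i) (by omega)
      · have he : i = m := by omega
        subst he
        rw [if_pos le_rfl, if_neg (by omega)]
        exact pf_lt_n hn τ.2 le_rfl
    · beta_reduce
      rw [segTotal_eq, Finset.sum_range_succ]
      have hs : ∀ i ∈ Finset.range m,
          segCost y σ (if i ≤ m then pf τ.1 i else n) (if i + 1 ≤ m then pf τ.1 (i + 1) else n)
              ((if i ≤ m then φs i else φ)) ((if i + 1 ≤ m then φs (i + 1) else φ))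
            + h ((if i + 1 ≤ m then pf τ.1 (i + 1) else n) - (if i ≤ m then pf τ.1 i else n))
          = segCost y σ (pf τ.1 i) (pf τ.1 (i + 1)) (φs i) (φs (i + 1))
            + h (pf τ.1 (i + 1) - pf τ.1 i) := by
        intro i hi
        rw [Finset.mem_range] at hi
        rw [if_pos (by omega), if_pos (by omega), if_pos (by omega), if_pos (by omega)]
      rw [Finset.sum_congr rfl hs]
      rw [if_pos le_rfl, if_neg (by omega), if_pos le_rfl, if_neg (by omega)]
      ring
end

section
/- Assume h : {1,…,n} → ℝ is nonnegative and nondecreasing. Let 1 ≤ t ≤ n−2, let τ ∈ T_t, and let T be an integer with t + 2 ≤ T ≤ n. Then for every φ ∈ ℝ, f_τ^T(φ) ≥ inf over φ', φ'' ∈ ℝ of [ f_τ^t(φ') + C(t, t+1, φ', φ'') + C(t+1, T, φ'', φ) ], where τ is viewed as an element of T_T. -/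
open Finset

/-- Splitting a segment cost at an interior point, with the linear interpolant value. -/
lemma segCost_split (y : ℕ → ℝ) (σ : ℝ) {s m T : ℕ} (hsm : s < m) (hmT : m < T)
    (a b : ℝ) :
    segCost y σ s T a b
      = segCost y σ s m a (a + (b - a) * ((m : ℝ) - s) / ((T : ℝ) - s))
        + segCost y σ m T (a + (b - a) * ((m : ℝ) - s) / ((T : ℝ) - s)) b := by
  have hms : ((m : ℝ) - s) ≠ 0 := by
    have : (s : ℝ) < m := by exact_mod_cast hsm
    linarith
  have hTs : ((T : ℝ) - s) ≠ 0 := by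
    have : (s : ℝ) < T := by exact_mod_cast hsm.trans hmT
    linarith
  have hTm : ((T : ℝ) - m) ≠ 0 := by
    have : (m : ℝ) < T := by exact_mod_cast hmT
    linarith
  set c : ℝ := a + (b - a) * ((m : ℝ) - s) / ((T : ℝ) - s) with hc
  unfold segCost
  rw [Finset.Icc_add_one_left_eq_Ioc, Finset.Icc_add_one_left_eq_Ioc, Finset.Icc_add_one_left_eq_Ioc,
    ← Finset.sum_Ioc_consecutive
      (fun j => (y j - a - ((b - a) / ((T : ℝ) - s)) * ((j : ℝ) - s)) ^ 2)
      hsm.le hmT.le, mul_add]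
  congr 1
  · congr 1
    refine Finset.sum_congr rfl fun j _ => ?_
    congr 1
    rw [hc]
    field_simp
    ring
  · congr 1
    refine Finset.sum_congr rfl fun j _ => ?_
    congr 1
    rw [hc]
    field_simp
    ring

section facts
variable {t : ℕ} {τ : List ℕ}

lemma p_lt (hτ : ValidCP t τ) (ht : 1 ≤ t) :
    ∀ i, i ≤ τ.length → (0 :: τ).getD i 0 < t := by
  intro i hi
  cases i with
  | zero => simpa using Nat.lt_of_lt_of_le Nat.zero_lt_one ht
  | succ j =>
      have hj : j < τ.length := hi
      rw [List.getD_cons_succ, List.getD_eq_getElem _ _ hj]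
      exact (hτ.2 _ (List.getElem_mem hj)).2

lemma p_mono (hτ : ValidCP t τ) :
    ∀ i, i < τ.length → (0 :: τ).getD i 0 < (0 :: τ).getD (i + 1) 0 := by
  intro i hi
  have hpw := List.isChain_iff_pairwise.mp hτ.1
  cases i with
  | zero =>
      rw [List.getD_cons_zero, List.getD_cons_succ, List.getD_eq_getElem _ _ hi]
      exact (hτ.2 _ (List.getElem_mem hi)).1
  | succ j =>
      have hj : j < τ.length := by omega
      rw [List.getD_cons_succ, List.getD_cons_succ,
        List.getD_eq_getElem _ _ hj, List.getD_eq_getElem _ _ hi]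
      exact List.pairwise_iff_get.mp hpw ⟨j, hj⟩ ⟨j + 1, hi⟩ (by simp)

end facts

lemma segTotal_nonneg (y : ℕ → ℝ) (σ β : ℝ) (hβ : 0 < β) (h : ℕ → ℝ)
    (n t : ℕ) (ht1 : 1 ≤ t) (htn : t ≤ n)
    (hpos : ∀ i, 1 ≤ i → i ≤ n → 0 ≤ h i)
    (τ : List ℕ) (hτ : ValidCP t τ) (φs : ℕ → ℝ) (φ : ℝ) :
    0 ≤ segTotal y σ β h t τ φs φ := by
  unfold segTotal
  have hsum : 0 ≤ ∑ i ∈ Finset.range τ.length,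
      (segCost y σ ((0 :: τ).getD i 0) ((0 :: τ).getD (i + 1) 0) (φs i) (φs (i + 1))
        + h ((0 :: τ).getD (i + 1) 0 - (0 :: τ).getD i 0)) := by
    refine Finset.sum_nonneg fun i hi => ?_
    have hi' : i < τ.length := Finset.mem_range.mp hi
    have hlt := p_mono hτ i hi'
    have hub : (0 :: τ).getD (i + 1) 0 < t := p_lt hτ ht1 (i + 1) hi'
    have hh : 0 ≤ h ((0 :: τ).getD (i + 1) 0 - (0 :: τ).getD i 0) :=
      hpos _ (by omega) (by omega)
    exact add_nonneg (segCost_nonneg _ _ _ _ _ _) hh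
  have hlast : (0 :: τ).getD τ.length 0 < t := p_lt hτ ht1 _ le_rfl
  have hh2 : 0 ≤ h (t - (0 :: τ).getD τ.length 0) := hpos _ (by omega) (by omega)
  have hseg := segCost_nonneg y σ ((0 :: τ).getD τ.length 0) t (φs τ.length) φ
  have hβ' : 0 ≤ β * ((τ.length : ℝ) + 1) := by positivity
  dsimp only
  linarith

lemma fseg_nonneg (y : ℕ → ℝ) (σ β : ℝ) (hβ : 0 < β) (h : ℕ → ℝ)
    (n t : ℕ) (ht1 : 1 ≤ t) (htn : t ≤ n)
    (hpos : ∀ i, 1 ≤ i → i ≤ n → 0 ≤ h i)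
    (τ : List ℕ) (hτ : ValidCP t τ) (φ : ℝ) :
    0 ≤ fseg y σ β h t τ φ :=
  le_ciInf fun φs => segTotal_nonneg y σ β hβ h n t ht1 htn hpos τ hτ φs φ


/-- for nonnegative nondecreasing `h`, `τ ∈ T_t` and `t + 2 ≤ T ≤ n`,
`f_τ^T(φ) ≥ inf_{φ',φ''} [f_τ^t(φ') + C(t,t+1,φ',φ'') + C(t+1,T,φ'',φ)]`. -/
theorem statement11 (n : ℕ) (hn : 1 ≤ n) (y : ℕ → ℝ) (σ : ℝ) (hσ : 0 < σ)
    (β : ℝ) (hβ : 0 < β) (h : ℕ → ℝ)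
    (hpos : ∀ i, 1 ≤ i → i ≤ n → 0 ≤ h i)
    (hmono : ∀ i j, 1 ≤ i → i ≤ j → j ≤ n → h i ≤ h j)
    (t : ℕ) (ht1 : 1 ≤ t) (htn : t + 2 ≤ n)
    (τ : List ℕ) (hτ : ValidCP t τ)
    (T : ℕ) (hT1 : t + 2 ≤ T) (hTn : T ≤ n) (φ : ℝ) :
    fseg y σ β h T τ φ ≥
      ⨅ φ' : ℝ, ⨅ φ'' : ℝ,
        (fseg y σ β h t τ φ' + segCost y σ t (t + 1) φ' φ''
          + segCost y σ (t + 1) T φ'' φ) := by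
  have htn' : t ≤ n := by omega
  have hfnn : ∀ φ' : ℝ, 0 ≤ fseg y σ β h t τ φ' := fun φ' =>
    fseg_nonneg y σ β hβ h n t ht1 htn' hpos τ hτ φ'
  -- the double infimum is bounded below by 0
  have hg : ∀ φ' φ'' : ℝ, 0 ≤ fseg y σ β h t τ φ' + segCost y σ t (t + 1) φ' φ''
      + segCost y σ (t + 1) T φ'' φ := fun φ' φ'' =>
    add_nonneg (add_nonneg (hfnn φ') (segCost_nonneg _ _ _ _ _ _)) (segCost_nonneg _ _ _ _ _ _)
  have hinner_bdd : ∀ φ' : ℝ, BddBelow (Set.range fun φ'' =>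
      fseg y σ β h t τ φ' + segCost y σ t (t + 1) φ' φ''
        + segCost y σ (t + 1) T φ'' φ) := fun φ' =>
    ⟨0, by rintro x ⟨φ'', rfl⟩; exact hg φ' φ''⟩
  have houter_bdd : BddBelow (Set.range fun φ' => ⨅ φ'' : ℝ,
      (fseg y σ β h t τ φ' + segCost y σ t (t + 1) φ' φ''
        + segCost y σ (t + 1) T φ'' φ)) := by
    refine ⟨0, ?_⟩
    rintro x ⟨φ', rfl⟩
    exact le_ciInf fun φ'' => hg φ' φ''
  rw [ge_iff_le, fseg]
  refine le_ciInf fun φs => ?_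
  -- notation
  set k := τ.length with hk
  set pk := (0 :: τ).getD k 0 with hpk
  have hpkt : pk < t := p_lt hτ ht1 k le_rfl
  set a := φs k with ha
  -- split values
  set c1 : ℝ := a + (φ - a) * ((t : ℝ) - pk) / ((T : ℝ) - pk) with hc1
  set c2 : ℝ := c1 + (φ - c1) * (((t + 1 : ℕ) : ℝ) - t) / ((T : ℝ) - t) with hc2
  have hsplit1 : segCost y σ pk T a φ
      = segCost y σ pk t a c1 + segCost y σ t T c1 φ :=
    segCost_split y σ hpkt (by omega) a φ
  have hsplit2 : segCost y σ t T c1 φ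
      = segCost y σ t (t + 1) c1 c2 + segCost y σ (t + 1) T c2 φ :=
    segCost_split y σ (by omega) (by omega) c1 φ
  -- h monotonicity
  have hmon : h (t - pk) ≤ h (T - pk) :=
    hmono _ _ (by omega) (by omega) (by omega)
  -- segTotal comparison
  have hcomp : segTotal y σ β h t τ φs c1 + segCost y σ t (t + 1) c1 c2
      + segCost y σ (t + 1) T c2 φ ≤ segTotal y σ β h T τ φs φ := by
    unfold segTotal
    dsimp only
    rw [← hk, ← hpk, ← ha, hsplit1, hsplit2]
    linarith
  -- fseg at t is below segTotal
  have hfle : fseg y σ β h t τ c1 ≤ segTotal y σ β h t τ φs c1 := by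
    refine ciInf_le ⟨0, ?_⟩ φs
    rintro x ⟨φs', rfl⟩
    exact segTotal_nonneg y σ β hβ h n t ht1 htn' hpos τ hτ φs' c1
  calc ⨅ φ' : ℝ, ⨅ φ'' : ℝ, (fseg y σ β h t τ φ' + segCost y σ t (t + 1) φ' φ''
          + segCost y σ (t + 1) T φ'' φ)
      ≤ ⨅ φ'' : ℝ, (fseg y σ β h t τ c1 + segCost y σ t (t + 1) c1 φ''
          + segCost y σ (t + 1) T φ'' φ) := ciInf_le houter_bdd c1
    _ ≤ fseg y σ β h t τ c1 + segCost y σ t (t + 1) c1 c2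
          + segCost y σ (t + 1) T c2 φ := ciInf_le (hinner_bdd c1) c2
    _ ≤ segTotal y σ β h t τ φs c1 + segCost y σ t (t + 1) c1 c2
          + segCost y σ (t + 1) T c2 φ := by linarith
    _ ≤ segTotal y σ β h T τ φs φ := hcomp
end

section
/- Strict convexity of the segment cost: for integers 0 ≤ s < t ≤ n with t − s ≥ 2, the function (φ, ψ) ↦ C(s,t,φ,ψ) from ℝ² to ℝ is strictly convex. -/
open Finset

/-- residual for point `j` at fitted pair `r`. -/
noncomputable def segRes (y : ℕ → ℝ) (s t : ℕ) (j : ℕ) (r : ℝ × ℝ) : ℝ :=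
  y j - r.1 - ((r.2 - r.1) / ((t : ℝ) - (s : ℝ))) * ((j : ℝ) - (s : ℝ))

theorem segCost_eq (y : ℕ → ℝ) (σ : ℝ) (s t : ℕ) (r : ℝ × ℝ) :
    segCost y σ s t r.1 r.2
      = (1 / σ ^ 2) * ∑ j ∈ Finset.Icc (s + 1) t, (segRes y s t j r) ^ 2 := rfl

/-- strict convexity of the segment cost: for `t - s ≥ 2`,
`(φ, ψ) ↦ C(s,t,φ,ψ)` is strictly convex on `ℝ²`. -/
theorem statement14 (n : ℕ) (hn : 1 ≤ n) (y : ℕ → ℝ) (σ : ℝ) (hσ : 0 < σ)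
    (s t : ℕ) (hst : s + 2 ≤ t) (htn : t ≤ n) :
    StrictConvexOn ℝ Set.univ (fun p : ℝ × ℝ => segCost y σ s t p.1 p.2) := by
  have hd2 : (2 : ℝ) ≤ (t : ℝ) - (s : ℝ) := by
    have : (s : ℝ) + 2 ≤ (t : ℝ) := by exact_mod_cast hst
    linarith
  have hd0 : (t : ℝ) - (s : ℝ) ≠ 0 := by linarith
  refine ⟨convex_univ, ?_⟩
  intro p _ q _ hpq a b ha hb hab
  obtain rfl : b = 1 - a := by linarith
  have key : ∀ j, segRes y s t j (a • p + (1 - a) • q)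
      = a * segRes y s t j p + (1 - a) * segRes y s t j q := by
    intro j
    simp only [segRes, Prod.fst_add, Prod.snd_add, Prod.smul_fst, Prod.smul_snd,
      smul_eq_mul]
    field_simp
    ring
  have expand : ∀ j, (segRes y s t j (a • p + (1 - a) • q)) ^ 2
      = a * (segRes y s t j p) ^ 2 + (1 - a) * (segRes y s t j q) ^ 2
        - a * (1 - a) * (segRes y s t j p - segRes y s t j q) ^ 2 := by
    intro j; rw [key]; ring
  have hpos : 0 < ∑ j ∈ Finset.Icc (s + 1) t,
      (segRes y s t j p - segRes y s t j q) ^ 2 := by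
    by_cases h2 : p.2 = q.2
    · have h1 : p.1 ≠ q.1 := by
        intro h1; exact hpq (Prod.ext h1 h2)
      refine Finset.sum_pos' (fun j _ => sq_nonneg _) ⟨s + 1, ?_, ?_⟩
      · rw [Finset.mem_Icc]; omega
      · have hv : segRes y s t (s + 1) p - segRes y s t (s + 1) q
            = (q.1 - p.1) * (((t : ℝ) - (s : ℝ)) - 1) / ((t : ℝ) - (s : ℝ)) := by
          simp only [segRes]
          rw [h2]
          push_cast
          field_simp
          ring
        rw [hv]
        have hne : (q.1 - p.1) * (((t : ℝ) - (s : ℝ)) - 1) / ((t : ℝ) - (s : ℝ)) ≠ 0 := by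
          apply div_ne_zero _ hd0
          apply mul_ne_zero (sub_ne_zero.mpr (Ne.symm h1))
          intro h; linarith [eq_of_sub_eq_zero h]
        exact lt_of_le_of_ne (sq_nonneg _) (Ne.symm (pow_ne_zero 2 hne))
    · refine Finset.sum_pos' (fun j _ => sq_nonneg _) ⟨t, ?_, ?_⟩
      · rw [Finset.mem_Icc]; omega
      · have hv : segRes y s t t p - segRes y s t t q = q.2 - p.2 := by
          simp only [segRes]
          field_simp
          ring
        rw [hv]
        have hne : q.2 - p.2 ≠ 0 := sub_ne_zero.mpr (Ne.symm h2)
        exact lt_of_le_of_ne (sq_nonneg _) (Ne.symm (pow_ne_zero 2 hne))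
  have hsum : ∑ j ∈ Finset.Icc (s + 1) t, (segRes y s t j (a • p + (1 - a) • q)) ^ 2
      < a * ∑ j ∈ Finset.Icc (s + 1) t, (segRes y s t j p) ^ 2
        + (1 - a) * ∑ j ∈ Finset.Icc (s + 1) t, (segRes y s t j q) ^ 2 := by
    rw [Finset.sum_congr rfl (fun j _ => expand j)]
    rw [Finset.sum_sub_distrib, Finset.sum_add_distrib, ← Finset.mul_sum,
      ← Finset.mul_sum, ← Finset.mul_sum]
    have : 0 < a * (1 - a) * ∑ j ∈ Finset.Icc (s + 1) t,
        (segRes y s t j p - segRes y s t j q) ^ 2 := by positivity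
    linarith
  have hc : (0 : ℝ) < 1 / σ ^ 2 := by positivity
  simp only [smul_eq_mul]
  show segCost y σ s t (a • p + (1 - a) • q).1 (a • p + (1 - a) • q).2
      < a * segCost y σ s t p.1 p.2 + (1 - a) * segCost y σ s t q.1 q.2
  rw [segCost_eq, segCost_eq, segCost_eq]
  nlinarith [mul_lt_mul_of_pos_left hsum hc]
end
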